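/- Let A be a Poisson algebra over a field K of characteristic 0 which is an integral domain (no zero divisors). Then Cas(A) is integrally closed in A: if a ∈ A satisfies p(a) = 0 for some monic polynomial p in one variable with all coefficients in Cas(A), then a ∈ Cas(A). -/

import Mathlib

section Aux

variable {K A : Type*} [Field K] [CharZero K] [CommRing A] [IsDomain A] [Algebra K A]
  (B : A →ₗ[K] A →ₗ[K] A)
  (anti : ∀ a b : A, B a b = - B b a)
  (leibniz : ∀ a b c : A, B (a * b) c = a * B b c + B a c * b)

include anti leibniz

lemma poisson_mul (b x y : A) : B b (x * y) = x * B b y + B b x * y := by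
  have := leibniz x y b
  have hx := anti b x
  have hy := anti b y
  have hxy := anti b (x * y)
  rw [anti (x*y) b] at hxy
  -- B b (x*y) = - B (x*y) b
  rw [anti b (x*y), this, hx, hy]
  ring

lemma poisson_one (b : A) : B b 1 = 0 := by
  have h := poisson_mul B anti leibniz b 1 1
  rw [mul_one, one_mul, mul_one] at h
  exact (right_eq_add.mp h)

lemma poisson_nat (b : A) (n : ℕ) : B b (n : A) = 0 := by
  have : ((n : A)) = n • (1 : A) := by simp
  rw [this, map_nsmul, poisson_one B anti leibniz, smul_zero]

lemma poisson_pow (b a : A) (i : ℕ) :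
    B b (a ^ (i + 1)) = (i + 1 : ℕ) * a ^ i * B b a := by
  induction i with
  | zero => simp [poisson_mul B anti leibniz]
  | succ k ih =>
    rw [pow_succ, poisson_mul B anti leibniz b (a ^ (k+1)) a, ih]
    push_cast
    ring

lemma poisson_eval (b a : A) (p : Polynomial A)
    (hc : ∀ n, B b (p.coeff n) = 0) :
    B b (p.eval a) = p.derivative.eval a * B b a := by
  rw [Polynomial.eval_eq_sum_range, map_sum]
  have key : ∀ i, B b (p.coeff i * a ^ i) = p.coeff i * B b (a ^ i) := by
    intro i
    rw [poisson_mul B anti leibniz, hc, zero_mul, add_zero]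
  simp_rw [key]
  rw [Finset.sum_range_succ']
  simp only [pow_zero, poisson_one B anti leibniz, mul_zero, add_zero]
  simp_rw [poisson_pow B anti leibniz]
  by_cases h0 : p.natDegree = 0
  · have hd : Polynomial.derivative p = 0 := by
      rw [Polynomial.eq_C_of_natDegree_eq_zero h0, Polynomial.derivative_C]
    rw [h0, hd]
    simp
  · rw [Polynomial.eval_eq_sum_range' (Polynomial.natDegree_derivative_lt h0)]
    rw [Finset.sum_mul]
    apply Finset.sum_congr rfl
    intro i _
    rw [Polynomial.coeff_derivative]
    push_cast
    ring

end Aux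

/-- Let `A` be a Poisson algebra over a field `K` of characteristic `0` which is an
integral domain.  Then `Cas(A)` is integrally closed in `A`: if `a : A` is a root of a
monic polynomial all of whose coefficients are Casimir elements, then `a` is a Casimir
element. -/
theorem casimirs_integrally_closed (K A : Type*) [Field K] [CharZero K]
    [CommRing A] [IsDomain A] [Algebra K A]
    (B : A →ₗ[K] A →ₗ[K] A)
    (anti : ∀ a b : A, B a b = - B b a)
    (jacobi : ∀ a b c : A, B (B a b) c + B (B b c) a + B (B c a) b = 0)
    (leibniz : ∀ a b c : A, B (a * b) c = a * B b c + B a c * b)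
    (a : A) (p : Polynomial A) (hmonic : p.Monic)
    (hcas : ∀ n : ℕ, ∀ b : A, B b (p.coeff n) = 0)
    (hroot : p.eval a = 0) :
    ∀ b : A, B b a = 0 := by
  have hinj : Function.Injective (algebraMap K A) := RingHom.injective _
  haveI : CharZero A := charZero_of_injective_algebraMap hinj
  intro b
  by_contra hba
  have H : ∀ n (q : Polynomial A), q.natDegree = n → q ≠ 0 →
      (∀ i, B b (q.coeff i) = 0) → q.eval a = 0 → False := by
    intro n
    induction n using Nat.strong_induction_on with
    | _ n ih =>
      intro q hdeg hq0 hc hev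
      rcases Nat.eq_zero_or_pos n with hn0 | hn1
      · subst hdeg
        have := Polynomial.eq_C_of_natDegree_eq_zero hn0
        rw [this, Polynomial.eval_C] at hev
        exact hq0 (by rw [this, hev, map_zero])
      · have hder : q.derivative.eval a * B b a = 0 := by
          rw [← poisson_eval B anti leibniz b a q hc, hev, map_zero]
        have hde : q.derivative.eval a = 0 :=
          (mul_eq_zero.mp hder).resolve_right hba
        obtain ⟨m, rfl⟩ : ∃ m, n = m + 1 := ⟨n - 1, by omega⟩
        have hdne : q.derivative ≠ 0 := by
          intro h
          have hcoef : q.derivative.coeff m = q.coeff (m + 1) * ((m : A) + 1) :=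
            Polynomial.coeff_derivative q m
          rw [h] at hcoef
          simp only [Polynomial.coeff_zero] at hcoef
          have hlc : q.coeff (m + 1) ≠ 0 := by
            rw [← hdeg]; exact Polynomial.leadingCoeff_ne_zero.mpr hq0
          have hnne : ((m : A) + 1) ≠ 0 := by
            rw [show ((m : A) + 1) = ((m + 1 : ℕ) : A) by push_cast; ring]
            exact Nat.cast_ne_zero.mpr (by omega)
          exact mul_ne_zero hlc hnne hcoef.symm
        have hcd : ∀ i, B b (q.derivative.coeff i) = 0 := by
          intro i
          rw [Polynomial.coeff_derivative, poisson_mul B anti leibniz, hc,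
            show ((i : A) + 1) = ((i + 1 : ℕ) : A) by push_cast; ring,
            poisson_nat B anti leibniz, mul_zero, zero_mul, add_zero]
        exact ih q.derivative.natDegree (by
            rw [← hdeg]
            exact Polynomial.natDegree_derivative_lt (by omega)) q.derivative rfl
          hdne hcd hde
  exact H p.natDegree p rfl hmonic.ne_zero (fun i => hcas i b) hroot
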